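/- Let A and B be n×n matrices over an algebraically closed field k, and let C, D be m×m matrices over k. Write χ(λ,μ) = det(λA + μB) = ∏_i (α_i λ + β_i μ) as a product of linear forms. Then det(λ A⊗C + μ B⊗D) = det(∏_i (λ α_i C + μ β_i D)). -/

import Mathlib

open Matrix Kronecker MvPolynomial

section aux

variable {k : Type*} [Field k]




lemma colrow_mulVec {N : ℕ} (u w x : Fin N → k) :
    (replicateCol (Fin 1) u * replicateRow (Fin 1) w) *ᵥ x = (w ⬝ᵥ x) • u := by
  ext i
  simp [mulVec, dotProduct, replicateCol, replicateRow, Matrix.mul_apply, Finset.sum_mul, Finset.mul_sum,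
    mul_comm, mul_left_comm]

/-- There is an invertible matrix with prescribed nonzero first column. -/
lemma exists_unit_col {N : ℕ} (v : Fin (N + 1) → k) (hv : v ≠ 0) :
    ∃ Q : Matrix (Fin (N + 1)) (Fin (N + 1)) k, IsUnit Q.det ∧
      Q *ᵥ Pi.single 0 1 = v := by
  obtain ⟨i₀, hi₀⟩ : ∃ i, v i ≠ 0 := by
    by_contra h
    push_neg at h
    exact hv (funext h)
  classical
  set c : k := if v 0 = 0 then (v i₀)⁻¹ else 0 with hc
  set w : Fin (N + 1) → k := (Pi.single 0 1 : Fin (N + 1) → k) + c • (Pi.single i₀ 1 : Fin (N + 1) → k) with hw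
  have hsd : ∀ (i : Fin (N+1)) (x : k) (y : Fin (N+1) → k),
      (Pi.single i x : Fin (N+1) → k) ⬝ᵥ y = x * y i := by
    intro i x y
    simp [dotProduct, Pi.single_apply, Finset.sum_ite_eq']
  have hw0 : w ⬝ᵥ Pi.single 0 1 = 1 := by
    rw [hw, add_dotProduct, smul_dotProduct, hsd, hsd]
    by_cases h0 : v 0 = 0
    · have hi0ne : i₀ ≠ 0 := by rintro rfl; exact hi₀ h0
      simp [Pi.single_eq_of_ne hi0ne]
    · simp [hc, h0]
  have hwv : w ⬝ᵥ v ≠ 0 := by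
    rw [hw, add_dotProduct, smul_dotProduct, hsd, hsd]
    by_cases h0 : v 0 = 0
    · have hi0ne : i₀ ≠ 0 := by rintro rfl; exact hi₀ h0
      simp [hc, h0, inv_mul_cancel₀ hi₀]
    · simp [hc, h0]
  refine ⟨1 + replicateCol (Fin 1) (v - Pi.single 0 1) * replicateRow (Fin 1) w, ?_, ?_⟩
  · erw [det_one_add_replicateCol_mul_replicateRow (ι := Fin 1)]
    have h1 : (1 : k) + w ⬝ᵥ (v - Pi.single 0 1) = w ⬝ᵥ v := by
      rw [dotProduct_sub, hw0]; ring
    rw [h1]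
    exact (isUnit_iff_ne_zero).2 hwv
  · rw [add_mulVec, one_mulVec, colrow_mulVec, hw0, one_smul]
    ext i
    simp




lemma exists_common_dir [IsAlgClosed k] {N : ℕ}
    (A B : Matrix (Fin (N + 1)) (Fin (N + 1)) k) :
    ∃ v : Fin (N + 1) → k, v ≠ 0 ∧ ∃ (u : Fin (N + 1) → k) (a b : k),
      A *ᵥ v = a • u ∧ B *ᵥ v = b • u := by
  by_cases hA : A.det = 0
  · obtain ⟨v, hv, hAv⟩ := (Matrix.exists_mulVec_eq_zero_iff).2 hA
    exact ⟨v, hv, B *ᵥ v, 0, 1, by simp [hAv], by simp⟩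
  · have hAu : IsUnit A.det := isUnit_iff_ne_zero.2 hA
    set M := A⁻¹ * B with hM
    obtain ⟨μ, hμ⟩ := Module.End.exists_eigenvalue (Matrix.toLin' M)
    obtain ⟨v, hv⟩ := hμ.exists_hasEigenvector
    refine ⟨v, hv.2, A *ᵥ v, 1, μ, by simp, ?_⟩
    have h1 : M *ᵥ v = μ • v := by
      have := hv.1
      rw [Module.End.mem_eigenspace_iff] at this
      simpa [Matrix.toLin'_apply] using this
    calc B *ᵥ v = (A * (A⁻¹ * B)) *ᵥ v := by rw [Matrix.mul_nonsing_inv_cancel_left _ _ hAu]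
    _ = A *ᵥ (M *ᵥ v) := by rw [← hM, ← Matrix.mulVec_mulVec]
    _ = μ • (A *ᵥ v) := by rw [h1, Matrix.mulVec_smul]






section lift


/-- The equivalence `Fin 1 ⊕ Fin N ≃ Fin (N+1)`. -/
def eSum (N : ℕ) : Fin 1 ⊕ Fin N ≃ Fin (N + 1) :=
  finSumFinEquiv.trans (finCongr (Nat.add_comm 1 N))

lemma eSum_inl (x : Fin 1) : eSum N (Sum.inl x) = 0 := by
  have : (x : ℕ) = 0 := by omega
  ext
  simp [eSum, finSumFinEquiv, Fin.castAdd, Fin.castLE, this]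

lemma eSum_inr (j : Fin N) : eSum N (Sum.inr j) = j.succ := by
  ext
  simp [eSum, finSumFinEquiv, Fin.natAdd]
  omega

/-- Embed an `N × N` matrix into an `(N+1) × (N+1)` matrix with a `1` in the corner. -/
def liftMat (M : Matrix (Fin N) (Fin N) k) : Matrix (Fin (N + 1)) (Fin (N + 1)) k :=
  (fromBlocks 1 0 0 M).submatrix (eSum N).symm (eSum N).symm

lemma det_liftMat (M : Matrix (Fin N) (Fin N) k) : (liftMat M).det = M.det := by
  rw [liftMat, det_submatrix_equiv_self, det_fromBlocks_zero₂₁]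
  simp

lemma blockTriangular_lift (x : Matrix (Fin 1) (Fin 1) k) (y : Matrix (Fin 1) (Fin N) k)
    (M : Matrix (Fin N) (Fin N) k) (hM : M.BlockTriangular id) :
    ((fromBlocks x y 0 M).submatrix (eSum N).symm (eSum N).symm).BlockTriangular id := by
  intro i j hij
  simp only [submatrix_apply]
  rcases h1 : (eSum N).symm i with i' | i'
  · exfalso
    have hi : i = 0 := by
      have := congrArg (eSum N) h1
      rwa [Equiv.apply_symm_apply, eSum_inl] at this
    rw [hi] at hij
    exact absurd hij (Fin.not_lt_zero j)
  · rcases h2 : (eSum N).symm j with j' | j'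
    · simp
    · have hi : i = i'.succ := by
        have := congrArg (eSum N) h1
        rwa [Equiv.apply_symm_apply, eSum_inr] at this
      have hj : j = j'.succ := by
        have := congrArg (eSum N) h2
        rwa [Equiv.apply_symm_apply, eSum_inr] at this
      simp only [fromBlocks_apply₂₂]
      apply hM
      show (id j' : Fin N) < id i'
      simp only [id] at hij ⊢
      rw [hi, hj] at hij
      exact (Fin.succ_lt_succ_iff).1 hij

/-- Decompose a matrix whose first column vanishes below the corner. -/
lemma decomp (M : Matrix (Fin (N + 1)) (Fin (N + 1)) k) (hM : ∀ i, i ≠ 0 → M i 0 = 0) :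
    M = (fromBlocks (Matrix.of fun _ _ => M 0 0) (Matrix.of fun _ j => M 0 j.succ)
          0 (M.submatrix Fin.succ Fin.succ)).submatrix (eSum N).symm (eSum N).symm := by
  ext i j
  simp only [submatrix_apply]
  have key : ∀ x : Fin (N+1), x = eSum N ((eSum N).symm x) := fun x =>
    (Equiv.apply_symm_apply _ _).symm
  rcases h1 : (eSum N).symm i with i' | i' <;> rcases h2 : (eSum N).symm j with j' | j'
  · have hi : i = 0 := by rw [key i, h1, eSum_inl]
    have hj : j = 0 := by rw [key j, h2, eSum_inl]
    subst hi; subst hj; rfl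
  · have hi : i = 0 := by rw [key i, h1, eSum_inl]
    have hj : j = j'.succ := by rw [key j, h2, eSum_inr]
    subst hi; subst hj; rfl
  · have hi : i = i'.succ := by rw [key i, h1, eSum_inr]
    have hj : j = 0 := by rw [key j, h2, eSum_inl]
    subst hi; subst hj
    exact (by simpa using hM _ (Fin.succ_ne_zero i') : M i'.succ 0 = (0:k))
  · have hi : i = i'.succ := by rw [key i, h1, eSum_inr]
    have hj : j = j'.succ := by rw [key j, h2, eSum_inr]
    subst hi; subst hj; rfl

end lift

/-- Simultaneous triangularization of a matrix pencil over an algebraically closed field. -/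
lemma pencil_triangularization [IsAlgClosed k] :
    ∀ {N : ℕ} (A B : Matrix (Fin N) (Fin N) k),
    ∃ P Q : Matrix (Fin N) (Fin N) k, IsUnit P.det ∧ IsUnit Q.det ∧
      (P * A * Q).BlockTriangular id ∧ (P * B * Q).BlockTriangular id := by
  intro N
  induction N with
  | zero =>
      intro A B
      exact ⟨1, 1, by simp, by simp, fun i _ _ => i.elim0, fun i _ _ => i.elim0⟩
  | succ N ih =>
      intro A B
      obtain ⟨v, hv, u, a, b, hAv, hBv⟩ := exists_common_dir A B
      obtain ⟨Q₀, hQ₀, hQ₀v⟩ := exists_unit_col v hv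
      obtain ⟨P₀, hP₀, c, hP₀u⟩ :
          ∃ P₀ : Matrix (Fin (N + 1)) (Fin (N + 1)) k, IsUnit P₀.det ∧
            ∃ c : k, P₀ *ᵥ u = c • (Pi.single 0 1 : Fin (N + 1) → k) := by
        by_cases hu : u = 0
        · exact ⟨1, by simp, 0, by simp [hu]⟩
        · obtain ⟨R, hR, hRu⟩ := exists_unit_col u hu
          refine ⟨R⁻¹, ?_, 1, ?_⟩
          · rw [Matrix.det_nonsing_inv]
            simp only [Ring.inverse_eq_inv]
            exact (isUnit_iff_ne_zero).2 (inv_ne_zero (isUnit_iff_ne_zero.1 hR))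
          · rw [← hRu, Matrix.mulVec_mulVec, Matrix.nonsing_inv_mul _ hR, Matrix.one_mulVec,
              one_smul]
      set A₁ := P₀ * A * Q₀ with hA₁def
      set B₁ := P₀ * B * Q₀ with hB₁def
      have hcol : ∀ (M : Matrix (Fin (N+1)) (Fin (N+1)) k) (s : k),
          M *ᵥ v = s • u → ∀ i, i ≠ 0 → (P₀ * M * Q₀) i 0 = 0 := by
        intro M s hMv i hi
        have h1 : (P₀ * M * Q₀) *ᵥ Pi.single 0 1
            = (s * c) • (Pi.single 0 1 : Fin (N + 1) → k) := by
          rw [← Matrix.mulVec_mulVec, ← Matrix.mulVec_mulVec, hQ₀v, hMv,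
            Matrix.mulVec_smul, hP₀u, smul_smul]
        have h2 := congrFun h1 i
        simp only [Matrix.mulVec_single, MulOpposite.op_one, one_smul, Matrix.col_apply, mul_one, Pi.smul_apply, smul_eq_mul] at h2
        rw [h2, Pi.single_eq_of_ne hi, mul_zero]
      have hA₁ : ∀ i, i ≠ 0 → A₁ i 0 = 0 := hcol A a hAv
      have hB₁ : ∀ i, i ≠ 0 → B₁ i 0 = 0 := hcol B b hBv
      obtain ⟨P', Q', hP', hQ', hTA, hTB⟩ :=
        ih (A₁.submatrix Fin.succ Fin.succ) (B₁.submatrix Fin.succ Fin.succ)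
      have main : ∀ (M M₁ : Matrix (Fin (N+1)) (Fin (N+1)) k),
          M₁ = P₀ * M * Q₀ → (∀ i, i ≠ 0 → M₁ i 0 = 0) →
          (P' * M₁.submatrix Fin.succ Fin.succ * Q').BlockTriangular id →
          (liftMat P' * P₀ * M * (Q₀ * liftMat Q')).BlockTriangular id := by
        intro M M₁ hdef h0 hT
        have key : liftMat P' * P₀ * M * (Q₀ * liftMat Q') = liftMat P' * M₁ * liftMat Q' := by
          rw [hdef]; noncomm_ring
        rw [key, decomp M₁ h0, liftMat, liftMat, submatrix_mul_equiv, submatrix_mul_equiv,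
          fromBlocks_multiply, fromBlocks_multiply]
        simp only [Matrix.one_mul, Matrix.mul_one, Matrix.zero_mul, Matrix.mul_zero,
          add_zero, zero_add, Matrix.mul_assoc]
        apply blockTriangular_lift
        rw [← Matrix.mul_assoc]
        exact hT
      refine ⟨liftMat P' * P₀, Q₀ * liftMat Q', ?_, ?_, ?_, ?_⟩
      · rw [Matrix.det_mul, det_liftMat]; exact hP'.mul hP₀
      · rw [Matrix.det_mul, det_liftMat]; exact hQ₀.mul hQ'
      · exact main A A₁ hA₁def hA₁ hTA
      · exact main B B₁ hB₁def hB₁ hTB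




lemma kron_block_det {n m : ℕ} (hm : 0 < m) (T S : Matrix (Fin n) (Fin n) k)
    (hT : T.BlockTriangular id) (hS : S.BlockTriangular id)
    (C D : Matrix (Fin m) (Fin m) k) (x y : k) :
    (x • (T ⊗ₖ C) + y • (S ⊗ₖ D)).det
      = ∏ i, ((x * T i i) • C + (y * S i i) • D).det := by
  classical
  set M := x • (T ⊗ₖ C) + y • (S ⊗ₖ D) with hM
  have hBT : M.BlockTriangular (Prod.fst : Fin n × Fin m → Fin n) := by
    intro p q hpq
    have h1 : T p.1 q.1 = 0 := hT hpq
    have h2 : S p.1 q.1 = 0 := hS hpq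
    simp [hM, kroneckerMap_apply, h1, h2]
  rw [hBT.det]
  have himg : (Finset.univ.image (Prod.fst : Fin n × Fin m → Fin n)) = Finset.univ := by
    ext a
    simp only [Finset.mem_image, Finset.mem_univ, iff_true]
    exact ⟨(a, ⟨0, hm⟩), trivial, rfl⟩
  rw [himg]
  apply Finset.prod_congr rfl
  intro i _
  let ee : Fin m ≃ {p : Fin n × Fin m // p.1 = i} :=
    ⟨fun j => ⟨(i, j), rfl⟩, fun p => p.1.2, fun j => rfl,
      fun p => Subtype.ext (Prod.ext p.2.symm rfl)⟩
  rw [← det_submatrix_equiv_self ee (M.toSquareBlock Prod.fst i)]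
  congr 1
  ext j j'
  simp only [Matrix.toSquareBlock_def, hM, kroneckerMap_apply, ee, Matrix.add_apply,
    Matrix.smul_apply, smul_eq_mul, Equiv.coe_fn_mk, Matrix.of_apply, Matrix.submatrix_apply]
  ring




lemma split_det [IsAlgClosed k] {m : ℕ} (hm : 0 < m) (C D : Matrix (Fin m) (Fin m) k) :
    ∃ γ δ : Fin m → k, ∀ x y : k,
      (x • C + y • D).det = ∏ j, (γ j * x + δ j * y) := by
  classical
  set p : Polynomial k := ((Polynomial.X : Polynomial k) • C.map Polynomial.C + D.map Polynomial.C).det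
    with hpdef
  have heval : ∀ t : k, p.eval t = (t • C + D).det := by
    intro t
    rw [hpdef, ← Polynomial.coe_evalRingHom, RingHom.map_det]
    congr 1
    ext i j
    simp only [RingHom.mapMatrix_apply, Matrix.map_apply, Matrix.add_apply,
      Matrix.smul_apply, smul_eq_mul, _root_.map_add, _root_.map_mul, Polynomial.coe_evalRingHom,
      Polynomial.eval_X, Polynomial.eval_C, Polynomial.eval_mul]
  have hdeg : p.natDegree ≤ m := by
    simpa using Polynomial.natDegree_det_X_add_C_le C D
  have hcoeff : p.coeff m = C.det := by
    simpa using Polynomial.coeff_det_X_add_C_card C D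
  by_cases hp0 : p = 0
  · refine ⟨fun _ => 0, fun _ => 0, fun x y => ?_⟩
    have hdet : (x • C + y • D).det = 0 := by
      by_cases hy : y = 0
      · subst hy
        have hC : C.det = 0 := by rw [← hcoeff, hp0, Polynomial.coeff_zero]
        simp [Matrix.det_smul, hC]
      · have h1 : x • C + y • D = y • ((x / y) • C + D) := by
          rw [smul_add, smul_smul]
          congr 2
          field_simp
        rw [h1, Matrix.det_smul, ← heval, hp0]
        simp
    rw [hdet]
    symm
    simp [Finset.prod_const, zero_pow hm.ne']
  · set c := p.leadingCoeff with hc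
    set d := p.natDegree with hd
    have hsplit : p.Splits := IsAlgClosed.splits p
    have hroots : p.roots.card = d := (Polynomial.splits_iff_card_roots).1 hsplit
    set L := p.roots.toList with hL
    have hLlen : L.length = d := by rw [hL, Multiset.length_toList, hroots]
    have hprodL : ∀ t : k, p.eval t = c * (L.map (fun r => t - r)).prod := by
      intro t
      conv_lhs => rw [hsplit.eq_prod_roots]
      rw [Polynomial.eval_mul, Polynomial.eval_C, Polynomial.eval_multiset_prod]
      congr 1
      have : p.roots = (L : Multiset k) := by rw [hL, Multiset.coe_toList]
      rw [this]
      rw [Multiset.map_coe, Multiset.map_coe, Multiset.prod_coe]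
      congr 1
      ext r
      simp
    -- the two families of linear coefficients
    set F : Fin m → k × k := fun j =>
      if h : (j : ℕ) < L.length then (1, -(L.get ⟨j, h⟩)) else (0, 1) with hF
    set z : Fin m := ⟨0, hm⟩ with hz
    set G : Fin m → k × k := fun j => if j = z then c • F j else F j with hG
    refine ⟨fun j => (G j).1, fun j => (G j).2, fun x y => ?_⟩
    have key1 : ∏ j, ((G j).1 * x + (G j).2 * y)
        = c * ∏ j, ((F j).1 * x + (F j).2 * y) := by
      rw [← Finset.mul_prod_erase Finset.univ _ (Finset.mem_univ z),
        ← Finset.mul_prod_erase Finset.univ (fun j => (F j).1 * x + (F j).2 * y)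
          (Finset.mem_univ z), ← mul_assoc]
      congr 1
      · simp only [hG, if_pos rfl, Prod.smul_fst, Prod.smul_snd, smul_eq_mul]
        ring
      · apply Finset.prod_congr rfl
        intro j hj
        have hjz : j ≠ z := (Finset.mem_erase.1 hj).1
        simp [hG, hjz]
    have key2 : ∏ j, ((F j).1 * x + (F j).2 * y)
        = (L.map (fun r => x - r * y)).prod * y ^ (m - d) := by
      have hdm : d ≤ m := hdeg
      have hmdd : m = d + (m - d) := by omega
      let e1 : Fin (d + (m - d)) ≃ Fin m := finCongr (by omega : d + (m - d) = m)
      rw [Fintype.prod_equiv e1.symm (fun j => ((F j).1 * x + (F j).2 * y))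
        (fun j => ((F (e1 j)).1 * x + (F (e1 j)).2 * y)) (fun j => by simp)]
      rw [Fintype.prod_equiv finSumFinEquiv.symm
        (fun j => ((F (e1 j)).1 * x + (F (e1 j)).2 * y))
        (fun s => ((F (e1 (finSumFinEquiv s))).1 * x + (F (e1 (finSumFinEquiv s))).2 * y))
        (fun j => by simp)]
      rw [Fintype.prod_sum_type]
      have hleft : ∀ i : Fin d,
          (F (e1 (finSumFinEquiv (Sum.inl i)))).1 * x
            + (F (e1 (finSumFinEquiv (Sum.inl i)))).2 * y
          = x - L.get ⟨(i : ℕ), by omega⟩ * y := by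
        intro i
        have hval : ((e1 (finSumFinEquiv (Sum.inl i))) : ℕ) = (i : ℕ) := by
          simp [e1, finSumFinEquiv, Fin.castAdd, Fin.castLE]
        have hlt : ((e1 (finSumFinEquiv (Sum.inl i))) : ℕ) < L.length := by
          rw [hval, hLlen]; exact i.2
        simp only [hF, dif_pos hlt]
        have hfin : (⟨((e1 (finSumFinEquiv (Sum.inl i))) : ℕ), hlt⟩ : Fin L.length)
            = ⟨(i : ℕ), by omega⟩ := Fin.mk_eq_mk.2 hval
        rw [hfin]
        ring
      have hright : ∀ i : Fin (m - d),
          (F (e1 (finSumFinEquiv (Sum.inr i)))).1 * x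
            + (F (e1 (finSumFinEquiv (Sum.inr i)))).2 * y = y := by
        intro i
        have hval : ((e1 (finSumFinEquiv (Sum.inr i))) : ℕ) = d + (i : ℕ) := by
          simp [e1, finSumFinEquiv, Fin.natAdd]
        have hnlt : ¬ ((e1 (finSumFinEquiv (Sum.inr i))) : ℕ) < L.length := by
          rw [hval, hLlen]; omega
        simp only [hF, dif_neg hnlt]
        ring
      rw [Finset.prod_congr rfl (fun i _ => hleft i),
        Finset.prod_congr rfl (fun i _ => hright i)]
      congr 1
      · -- ∏ i : Fin d, (x - L.get ⟨i,_⟩ * y) = (L.map fun r => x - r*y).prod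
        rw [← Fin.prod_univ_fun_getElem L (fun r => x - r * y)]
        exact (Fintype.prod_equiv (finCongr hLlen) _ _ (fun i => by
          congr 1)).symm
      · simp [Finset.prod_const]
    rw [key1, key2]
    -- main analytic identity
    by_cases hy : y = 0
    · subst hy
      have h1 : (L.map fun r => x - r * 0).prod = x ^ d := by
        have hrep : (L.map fun r => x - r * 0)
            = List.replicate (L.map fun r => x - r * 0).length x := by
          apply List.eq_replicate_of_mem
          intro b hb
          simp only [List.mem_map] at hb
          obtain ⟨r, _, hr⟩ := hb
          rw [← hr]; ring
        rw [hrep, List.prod_replicate, List.length_map, hLlen]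
      rw [h1]
      rcases eq_or_lt_of_le hdeg with hdm | hdm
      · have hcd : C.det = c := by
          rw [← hcoeff, hc, Polynomial.leadingCoeff, ← hd, hdm]
        have : x • C + (0:k) • D = x • C := by simp
        rw [this, Matrix.det_smul, hcd, Fintype.card_fin, ← hdm]
        simp [Nat.sub_self]
        ring
      · have hcd : C.det = 0 := by
          rw [← hcoeff]
          exact Polynomial.coeff_eq_zero_of_natDegree_lt hdm
        have : x • C + (0:k) • D = x • C := by simp
        rw [this, Matrix.det_smul, hcd, Fintype.card_fin]
        have h0 : (0:k) ^ (m - d) = 0 := by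
          apply zero_pow
          omega
        rw [h0]
        ring
    · have h1 : x • C + y • D = y • ((x / y) • C + D) := by
        rw [smul_add, smul_smul]
        congr 2
        field_simp
      rw [h1, Matrix.det_smul, ← heval, hprodL, Fintype.card_fin]
      have h2 : (L.map fun r => x - r * y).prod
          = y ^ d * (L.map fun r => x / y - r).prod := by
        have h3 : (L.map fun r => x - r * y) = (L.map fun r => y * (x / y - r)) := by
          apply List.map_congr_left
          intro r _
          field_simp
        rw [h3]
        have h4 : (L.map fun r => y * (x / y - r)).prod
            = (L.map fun _ => y).prod * (L.map fun r => x / y - r).prod :=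
          List.prod_map_mul
        rw [h4]
        congr 1
        rw [List.map_const', List.prod_replicate, hLlen]
      rw [h2]
      have hym : y ^ m = y ^ d * y ^ (m - d) := by
        rw [← pow_add]
        congr 1
        omega
      rw [hym]
      ring







lemma det_homog {ι σ : Type*} [Fintype ι] [DecidableEq ι]
    (W : Matrix ι ι (MvPolynomial σ k)) (h : ∀ i j, (W i j).IsHomogeneous 1) :
    W.det.IsHomogeneous (Fintype.card ι) := by
  rw [Matrix.det_apply]
  apply MvPolynomial.IsHomogeneous.sum
  intro g _
  have hprod : (∏ i, W (g i) i).IsHomogeneous (Fintype.card ι) := by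
    have := MvPolynomial.IsHomogeneous.prod Finset.univ (fun i => W (g i) i)
      (fun _ => 1) (fun i _ => h _ _)
    simpa [Finset.sum_const, Finset.card_univ] using this
  rcases Int.units_eq_one_or (Equiv.Perm.sign g) with h1 | h1
  · rw [h1, one_smul]; exact hprod
  · rw [h1, Units.neg_smul, one_smul]; exact hprod.neg

/-- Core scalar version of the extended Cayley theorem. -/
lemma core_scalar [IsAlgClosed k] {n m : ℕ}
    (A B : Matrix (Fin n) (Fin n) k) (C D : Matrix (Fin m) (Fin m) k)
    (α β : Fin n → k)
    (h : ∀ x y : k, (x • A + y • B).det = ∏ i, (α i * x + β i * y))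
    (x y : k) :
    (x • (A ⊗ₖ C) + y • (B ⊗ₖ D)).det
      = ∏ i, ((α i * x) • C + (β i * y) • D).det := by
  rcases Nat.eq_zero_or_pos m with hm | hm
  · subst hm
    haveI : IsEmpty (Fin n × Fin 0) := ⟨fun p => p.2.elim0⟩
    rw [Matrix.det_isEmpty]
    symm
    apply Finset.prod_eq_one
    intro i _
    exact Matrix.det_isEmpty
  obtain ⟨P, Q, hP, hQ, hTA, hTB⟩ := pencil_triangularization A B
  set T := P * A * Q with hTdef
  set S := P * B * Q with hSdef
  obtain ⟨γ, δ, hγδ⟩ := split_det hm C D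
  set c := P.det * Q.det with hc
  have hcu : IsUnit c := hP.mul hQ
  -- step 1 : diagonal products of T, S are governed by h
  have hTS : ∀ u v : k, (∏ i, (u * T i i + v * S i i)) = c * ∏ i, (α i * u + β i * v) := by
    intro u v
    have htri : (u • T + v • S).BlockTriangular id := by
      intro i j hij
      simp [hTA hij, hTB hij]
    have h1 : (u • T + v • S).det = ∏ i, (u * T i i + v * S i i) := by
      rw [Matrix.det_of_upperTriangular htri]
      apply Finset.prod_congr rfl
      intro i _
      simp
    have h2 : u • T + v • S = P * (u • A + v • B) * Q := by
      rw [hTdef, hSdef]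
      rw [Matrix.mul_add, Matrix.add_mul]
      congr 1 <;> rw [mul_smul_comm, smul_mul_assoc]
    have h3 : (u • T + v • S).det = c * ∏ i, (α i * u + β i * v) := by
      rw [h2, Matrix.det_mul, Matrix.det_mul, h u v, hc]
      ring
    rw [← h1, h3]
  -- step 2 : Kronecker determinant via block triangular structure
  have hK : (P ⊗ₖ (1 : Matrix (Fin m) (Fin m) k)) * (x • (A ⊗ₖ C) + y • (B ⊗ₖ D))
        * (Q ⊗ₖ (1 : Matrix (Fin m) (Fin m) k))
      = x • (T ⊗ₖ C) + y • (S ⊗ₖ D) := by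
    rw [Matrix.mul_add, Matrix.add_mul]
    congr 1
    · rw [mul_smul_comm, smul_mul_assoc, ← mul_kronecker_mul, ← mul_kronecker_mul,
        Matrix.one_mul, Matrix.mul_one, hTdef]
    · rw [mul_smul_comm, smul_mul_assoc, ← mul_kronecker_mul, ← mul_kronecker_mul,
        Matrix.one_mul, Matrix.mul_one, hSdef]
  have hdetP : (P ⊗ₖ (1 : Matrix (Fin m) (Fin m) k)).det = P.det ^ m := by
    rw [det_kronecker]
    simp
  have hdetQ : (Q ⊗ₖ (1 : Matrix (Fin m) (Fin m) k)).det = Q.det ^ m := by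
    rw [det_kronecker]
    simp
  have hdetK : P.det ^ m * ((x • (A ⊗ₖ C) + y • (B ⊗ₖ D)).det * Q.det ^ m)
      = ∏ i, ((x * T i i) • C + (y * S i i) • D).det := by
    rw [← hdetP, ← hdetQ, ← Matrix.det_mul, ← Matrix.det_mul, ← Matrix.mul_assoc, hK,
      kron_block_det hm T S hTA hTB C D x y]
  -- step 3 : rearrange products via the split of det (xC + yD)
  have hsplit2 : (∏ i, ((x * T i i) • C + (y * S i i) • D).det)
      = c ^ m * ∏ i, ((α i * x) • C + (β i * y) • D).det := by
    have e1 : ∀ i : Fin n, ((x * T i i) • C + (y * S i i) • D).det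
        = ∏ j, (γ j * (x * T i i) + δ j * (y * S i i)) := fun i => hγδ _ _
    have e2 : ∀ i : Fin n, ((α i * x) • C + (β i * y) • D).det
        = ∏ j, (γ j * (α i * x) + δ j * (β i * y)) := fun i => hγδ _ _
    calc (∏ i, ((x * T i i) • C + (y * S i i) • D).det)
        = ∏ i, ∏ j, (γ j * (x * T i i) + δ j * (y * S i i)) :=
          Finset.prod_congr rfl (fun i _ => e1 i)
      _ = ∏ j, ∏ i, ((γ j * x) * T i i + (δ j * y) * S i i) := by
          rw [Finset.prod_comm]
          apply Finset.prod_congr rfl; intro i _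
          apply Finset.prod_congr rfl; intro j _
          ring
      _ = ∏ j : Fin m, (c * ∏ i, (α i * (γ j * x) + β i * (δ j * y))) := by
          apply Finset.prod_congr rfl; intro j _
          exact hTS (γ j * x) (δ j * y)
      _ = c ^ m * ∏ j : Fin m, ∏ i, (α i * (γ j * x) + β i * (δ j * y)) := by
          rw [Finset.prod_mul_distrib, Finset.prod_const, Finset.card_univ, Fintype.card_fin]
      _ = c ^ m * ∏ i, ∏ j, (γ j * (α i * x) + δ j * (β i * y)) := by
          congr 1
          rw [Finset.prod_comm]
          apply Finset.prod_congr rfl; intro j _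
          apply Finset.prod_congr rfl; intro i _
          ring
      _ = c ^ m * ∏ i, ((α i * x) • C + (β i * y) • D).det := by
          congr 1
          exact (Finset.prod_congr rfl (fun i _ => (e2 i).symm))
  -- conclude by cancelling the unit c ^ m
  have hcm : IsUnit (c ^ m) := hcu.pow m
  apply hcm.mul_left_cancel
  calc c ^ m * (x • (A ⊗ₖ C) + y • (B ⊗ₖ D)).det
      = P.det ^ m * ((x • (A ⊗ₖ C) + y • (B ⊗ₖ D)).det * Q.det ^ m) := by
        rw [hc]; ring
    _ = ∏ i, ((x * T i i) • C + (y * S i i) • D).det := hdetK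
    _ = c ^ m * ∏ i, ((α i * x) • C + (β i * y) • D).det := hsplit2






lemma hom1 {σ : Type*} (r s : k) (i j : σ) :
    (MvPolynomial.C r * X i + MvPolynomial.C s * X j).IsHomogeneous 1 :=
  (isHomogeneous_C_mul_X r i).add (isHomogeneous_C_mul_X s j)


end aux

/-- Extended Cayley theorem: if `det (λA + μB) = ∏ i, (α i λ + β i μ)`, then
`det (λ A⊗C + μ B⊗D) = det (∏ i, (λ α i • C + μ β i • D))` (the matrix product taken
in any fixed order, here the canonical one). -/
theorem extended_cayley {k : Type*} [Field k] [IsAlgClosed k] {n m : ℕ}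
    (A B : Matrix (Fin n) (Fin n) k) (C D : Matrix (Fin m) (Fin m) k)
    (α β : Fin n → k)
    (hfac : Matrix.det ((X 0 : MvPolynomial (Fin 2) k) • A.map (MvPolynomial.C : k → MvPolynomial (Fin 2) k)
        + (X 1 : MvPolynomial (Fin 2) k) • B.map (MvPolynomial.C : k → MvPolynomial (Fin 2) k))
      = ∏ i, (MvPolynomial.C (α i) * X 0 + MvPolynomial.C (β i) * X 1)) :
    Matrix.det ((X 0 : MvPolynomial (Fin 2) k) • (A ⊗ₖ C).map (MvPolynomial.C : k → MvPolynomial (Fin 2) k)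
        + (X 1 : MvPolynomial (Fin 2) k) • (B ⊗ₖ D).map (MvPolynomial.C : k → MvPolynomial (Fin 2) k))
      = Matrix.det (((List.finRange n).map fun i =>
          ((MvPolynomial.C (α i) * X 0 : MvPolynomial (Fin 2) k) • C.map (MvPolynomial.C : k → MvPolynomial (Fin 2) k)
            + (MvPolynomial.C (β i) * X 1 : MvPolynomial (Fin 2) k) • D.map (MvPolynomial.C : k → MvPolynomial (Fin 2) k) :
            Matrix (Fin m) (Fin m) (MvPolynomial (Fin 2) k))).prod) := by
  classical
  set R := MvPolynomial (Fin 2) k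
  set f : Fin n → Matrix (Fin m) (Fin m) R := fun i =>
    ((MvPolynomial.C (α i) * X 0 : R) • C.map (MvPolynomial.C : k → R)
      + (MvPolynomial.C (β i) * X 1 : R) • D.map (MvPolynomial.C : k → R)) with hf
  -- the determinant of the product is the product of the determinants
  have hRHS : Matrix.det (((List.finRange n).map f).prod) = ∏ i, (f i).det := by
    rw [show Matrix.det (((List.finRange n).map f).prod)
        = Matrix.detMonoidHom (((List.finRange n).map f).prod) from rfl,
      map_list_prod, List.map_map, Fin.prod_univ_def]
    rfl
  rw [hRHS]
  -- entries of the relevant matrices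
  have hentL : ∀ (i j : Fin n × Fin m),
      ((X 0 : R) • (A ⊗ₖ C).map (MvPolynomial.C : k → R)
        + (X 1 : R) • (B ⊗ₖ D).map (MvPolynomial.C : k → R)) i j
      = MvPolynomial.C ((A ⊗ₖ C) i j) * X 0 + MvPolynomial.C ((B ⊗ₖ D) i j) * X 1 := by
    intro i j
    simp only [Matrix.add_apply, Matrix.smul_apply, Matrix.map_apply, smul_eq_mul]
    ring
  have hentR : ∀ (i : Fin n) (a b : Fin m),
      f i a b = MvPolynomial.C (α i * C a b) * X 0 + MvPolynomial.C (β i * D a b) * X 1 := by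
    intro i a b
    simp only [hf, Matrix.add_apply, Matrix.smul_apply, Matrix.map_apply, smul_eq_mul,
      MvPolynomial.C_mul]
    ring
  -- homogeneity of both sides
  have hcard : Fintype.card (Fin n × Fin m) = n * m := by simp
  have hhomL : (Matrix.det ((X 0 : R) • (A ⊗ₖ C).map (MvPolynomial.C : k → R)
      + (X 1 : R) • (B ⊗ₖ D).map (MvPolynomial.C : k → R))).IsHomogeneous (n * m) := by
    rw [← hcard]
    apply det_homog
    intro i j
    rw [hentL i j]
    exact hom1 _ _ _ _
  have hhomR : (∏ i, (f i).det).IsHomogeneous (n * m) := by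
    have hfd : ∀ i : Fin n, (f i).det.IsHomogeneous m := by
      intro i
      have := det_homog (f i) (fun a b => by rw [hentR i a b]; exact hom1 _ _ _ _)
      simpa using this
    have := MvPolynomial.IsHomogeneous.prod Finset.univ (fun i => (f i).det)
      (fun _ => m) (fun i _ => hfd i)
    simpa [Finset.sum_const, Finset.card_univ, mul_comm] using this
  -- reduce to evaluation at points
  apply hhomL.funext hhomR
  intro r
  have hr : r = ![r 0, r 1] := by
    funext j
    fin_cases j <;> simp
  -- the scalar hypothesis
  have hsc : ∀ x y : k, (x • A + y • B).det = ∏ i, (α i * x + β i * y) := by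
    intro x y
    have h1 := congrArg (MvPolynomial.eval (![x, y] : Fin 2 → k)) hfac
    rw [RingHom.map_det, map_prod] at h1
    have h2 : (RingHom.mapMatrix (MvPolynomial.eval (![x, y] : Fin 2 → k)))
        ((X 0 : R) • A.map (MvPolynomial.C : k → R)
          + (X 1 : R) • B.map (MvPolynomial.C : k → R)) = x • A + y • B := by
      ext i j
      simp [Matrix.map_apply]
    rw [h2] at h1
    rw [h1]
    apply Finset.prod_congr rfl
    intro i _
    simp
  have hcore := core_scalar A B C D α β hsc (r 0) (r 1)
  -- evaluate both sides
  rw [RingHom.map_det, map_prod]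
  have hL : (RingHom.mapMatrix (MvPolynomial.eval r))
      ((X 0 : R) • (A ⊗ₖ C).map (MvPolynomial.C : k → R)
        + (X 1 : R) • (B ⊗ₖ D).map (MvPolynomial.C : k → R))
      = r 0 • (A ⊗ₖ C) + r 1 • (B ⊗ₖ D) := by
    ext i j
    simp [hentL i j, Matrix.map_apply]
    ring
  rw [hL, hcore]
  apply Finset.prod_congr rfl
  intro i _
  rw [RingHom.map_det]
  congr 1
  ext a b
  simp [hentR i a b, Matrix.map_apply]
  ring
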